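/- Let n ≥ 5 be a prime number. The number of cyclic compositions of n into three positive parts of which exactly one is odd and two are even equals (n-1)(n-3)/8. -/

import Mathlib

private def rot3 (u : ℕ × ℕ × ℕ) : ℕ × ℕ × ℕ := (u.2.1, u.2.2, u.1)

private def Orb3 (u v : ℕ × ℕ × ℕ) : Prop := v = u ∨ v = rot3 u ∨ v = rot3 (rot3 u)

private lemma orb3_refl (u : ℕ × ℕ × ℕ) : Orb3 u u := Or.inl rfl

private lemma orb3_symm {u v : ℕ × ℕ × ℕ} (h : Orb3 u v) : Orb3 v u := by
  obtain ⟨a, b, c⟩ := u; obtain ⟨d, e, f⟩ := v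
  simp only [Orb3, rot3, Prod.mk.injEq] at *
  omega

private lemma orb3_trans {u v w : ℕ × ℕ × ℕ} (h1 : Orb3 u v) (h2 : Orb3 v w) :
    Orb3 u w := by
  obtain ⟨a, b, c⟩ := u; obtain ⟨d, e, f⟩ := v; obtain ⟨g, i, j⟩ := w
  simp only [Orb3, rot3, Prod.mk.injEq] at *
  omega

private lemma eqvGen_orb {α : Type*} {π : α → ℕ × ℕ × ℕ} {r : α → α → Prop}
    (hr : ∀ x y, r x y → π y = rot3 (π x)) {x y : α} (h : Relation.EqvGen r x y) :
    Orb3 (π x) (π y) := by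
  induction h with
  | rel a b hab => exact Or.inr (Or.inl (hr _ _ hab))
  | refl a => exact orb3_refl _
  | symm a b _ ih => exact orb3_symm ih
  | trans a b c _ _ ih1 ih2 => exact orb3_trans ih1 ih2

private def Pn (n : ℕ) (t : ℕ × ℕ × ℕ) : Prop :=
  (0 < t.1 ∧ 0 < t.2.1 ∧ 0 < t.2.2) ∧
    ((Odd t.1 ∧ Even t.2.1 ∧ Even t.2.2) ∨ (Even t.1 ∧ Odd t.2.1 ∧ Even t.2.2) ∨
      (Even t.1 ∧ Even t.2.1 ∧ Odd t.2.2)) ∧ t.1 + t.2.1 + t.2.2 = n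

private lemma mkPn (n k b c : ℕ) (hk : n = 2 * k + 1) (hb : 0 < b) (hc : 0 < c)
    (hbc : b + c ≤ k) : Pn n (n - (2*b + 2*c), 2*b, 2*c) := by
  refine ⟨⟨?_, ?_, ?_⟩, Or.inl ⟨?_, ?_, ?_⟩, ?_⟩
  · show 0 < n - (2*b + 2*c); omega
  · show 0 < 2*b; omega
  · show 0 < 2*c; omega
  · show Odd (n - (2*b + 2*c))
    exact Nat.Odd.sub_even (by omega) ⟨k, by omega⟩ ⟨b + c, by ring⟩
  · exact ⟨b, two_mul b⟩
  · exact ⟨c, two_mul c⟩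
  · show n - (2*b + 2*c) + 2*b + 2*c = n; omega

private lemma count_pairs (k : ℕ) :
    Nat.card {p : ℕ × ℕ // 0 < p.1 ∧ 0 < p.2 ∧ p.1 + p.2 ≤ k} = k * (k - 1) / 2 := by
  classical
  have h1 : Nat.card {p : ℕ × ℕ // 0 < p.1 ∧ 0 < p.2 ∧ p.1 + p.2 ≤ k}
      = Set.ncard {p : ℕ × ℕ | 0 < p.1 ∧ 0 < p.2 ∧ p.1 + p.2 ≤ k} :=
    Nat.card_coe_set_eq _
  have hset : {p : ℕ × ℕ | 0 < p.1 ∧ 0 < p.2 ∧ p.1 + p.2 ≤ k} =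
      ↑((Finset.Icc 1 k ×ˢ Finset.Icc 1 k).filter fun p => p.1 + p.2 ≤ k) := by
    ext ⟨b, c⟩
    simp only [Set.mem_setOf_eq, Finset.coe_filter, Finset.mem_product, Finset.mem_Icc,
      Set.mem_setOf_eq]
    omega
  rw [h1, hset, Set.ncard_coe_finset]
  have hcard : ((Finset.Icc 1 k ×ˢ Finset.Icc 1 k).filter fun p => p.1 + p.2 ≤ k).card
      = ∑ b ∈ Finset.Icc 1 k, (k - b) := by
    rw [Finset.card_eq_sum_card_fiberwise (f := Prod.fst) (t := Finset.Icc 1 k)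
      (fun p hp => by
        simp only [Finset.mem_coe, Finset.mem_filter, Finset.mem_product] at hp
        exact hp.1.1)]
    refine Finset.sum_congr rfl fun b hb => ?_
    have hb' := Finset.mem_Icc.mp hb
    have : ((Finset.Icc 1 k ×ˢ Finset.Icc 1 k).filter fun p => p.1 + p.2 ≤ k).filter
        (fun p => p.1 = b) = (Finset.Icc 1 (k - b)).map
          ⟨fun c => (b, c), fun c d h => (Prod.mk.injEq _ _ _ _ ▸ h).2⟩ := by
      ext ⟨x, y⟩
      simp only [Finset.mem_filter, Finset.mem_product, Finset.mem_Icc, Finset.mem_map,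
        Function.Embedding.coeFn_mk, Prod.mk.injEq]
      constructor
      · rintro ⟨⟨⟨⟨hx1, hx2⟩, hy1, hy2⟩, hsum⟩, hxy⟩
        exact ⟨y, ⟨by omega, by omega⟩, by subst hxy; rfl⟩
      · rintro ⟨c, hc, rfl, rfl⟩
        omega
    rw [this, Finset.card_map, Nat.card_Icc]
    omega
  rw [hcard]
  have hsum : ∑ b ∈ Finset.Icc 1 k, (k - b) = ∑ j ∈ Finset.range k, j := by
    refine Finset.sum_bij' (fun b _ => k - b) (fun j _ => k - j) ?_ ?_ ?_ ?_ ?_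
    · intro b hb
      have := Finset.mem_Icc.mp hb
      simp only [Finset.mem_range]; omega
    · intro j hj
      have := Finset.mem_range.mp hj
      simp only [Finset.mem_Icc]; omega
    · intro b hb
      have := Finset.mem_Icc.mp hb
      show k - (k - b) = b; omega
    · intro j hj
      have := Finset.mem_range.mp hj
      show k - (k - j) = j; omega
    · intro b hb; rfl
  rw [hsum, Finset.sum_range_id]

/-- For a prime `n ≥ 5`, the number of cyclic compositions of `n` into
three positive parts exactly one of which is odd (and two of which are even)
equals `(n-1)(n-3)/8`. -/
theorem cyclic_compositions_one_odd_count (n : ℕ) (hn : n.Prime) (h5 : 5 ≤ n) :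
    Nat.card (Quot (fun x y :
        {t : ℕ × ℕ × ℕ // (0 < t.1 ∧ 0 < t.2.1 ∧ 0 < t.2.2) ∧
          ((Odd t.1 ∧ Even t.2.1 ∧ Even t.2.2) ∨ (Even t.1 ∧ Odd t.2.1 ∧ Even t.2.2) ∨
            (Even t.1 ∧ Even t.2.1 ∧ Odd t.2.2)) ∧ t.1 + t.2.1 + t.2.2 = n} =>
        (y : ℕ × ℕ × ℕ) = (x.val.2.1, x.val.2.2, x.val.1))) = (n - 1) * (n - 3) / 8 := by
  classical
  have hodd : Odd n := hn.odd_of_ne_two (by omega)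
  obtain ⟨k, hk⟩ := hodd
  have hk2 : 2 ≤ k := by omega
  set T := {t : ℕ × ℕ × ℕ // (0 < t.1 ∧ 0 < t.2.1 ∧ 0 < t.2.2) ∧
      ((Odd t.1 ∧ Even t.2.1 ∧ Even t.2.2) ∨ (Even t.1 ∧ Odd t.2.1 ∧ Even t.2.2) ∨
        (Even t.1 ∧ Even t.2.1 ∧ Odd t.2.2)) ∧ t.1 + t.2.1 + t.2.2 = n} with hT
  set r : T → T → Prop :=
    fun x y => (y : ℕ × ℕ × ℕ) = (x.val.2.1, x.val.2.2, x.val.1) with hr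
  let f : {p : ℕ × ℕ // 0 < p.1 ∧ 0 < p.2 ∧ p.1 + p.2 ≤ k} → Quot r :=
    fun p => Quot.mk r ⟨(n - (2*p.1.1 + 2*p.1.2), 2*p.1.1, 2*p.1.2),
      mkPn n k p.1.1 p.1.2 hk p.2.1 p.2.2.1 p.2.2.2⟩
  have hbij : Function.Bijective f := by
    constructor
    · rintro ⟨⟨pb, pc⟩, hp1, hp2, hp3⟩ ⟨⟨qb, qc⟩, hq1, hq2, hq3⟩ h
      have horb : Orb3 (n - (2*pb + 2*pc), 2*pb, 2*pc) (n - (2*qb + 2*qc), 2*qb, 2*qc) := by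
        have := Quot.eq.mp h
        exact eqvGen_orb (π := fun t : T => (t : ℕ × ℕ × ℕ)) (fun x y hxy => hxy) this
      simp only [Orb3, rot3, Prod.mk.injEq] at horb
      simp only [Subtype.mk.injEq, Prod.mk.injEq]
      omega
    · intro q
      induction q using Quot.ind with
      | _ t =>
        obtain ⟨⟨a, b, c⟩, ⟨ha, hb, hc⟩, hpar, hsum⟩ := t
        replace ha : 0 < a := ha
        replace hb : 0 < b := hb
        replace hc : 0 < c := hc
        replace hsum : a + b + c = n := hsum
        replace hpar : (Odd a ∧ Even b ∧ Even c) ∨ (Even a ∧ Odd b ∧ Even c) ∨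
            (Even a ∧ Even b ∧ Odd c) := hpar
        rcases hpar with ⟨hoa, ⟨b', hb'⟩, ⟨c', hc'⟩⟩ | ⟨⟨a', ha'⟩, hob, ⟨c', hc'⟩⟩ |
          ⟨⟨a', ha'⟩, ⟨b', hb'⟩, hoc⟩
        · obtain ⟨a', ha'⟩ := hoa
          refine ⟨⟨(b', c'), by omega, by omega, by omega⟩, ?_⟩
          exact congrArg (Quot.mk r) (Subtype.ext (by
            dsimp only; simp only [Prod.mk.injEq]; omega))
        · obtain ⟨m, hm⟩ := hob
          have hmem : Pn n (b, c, a) :=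
            ⟨⟨hb, hc, ha⟩, Or.inl ⟨⟨m, hm⟩, ⟨c', hc'⟩, ⟨a', ha'⟩⟩, by show b + c + a = n; omega⟩
          refine ⟨⟨(c', a'), by omega, by omega, by omega⟩, ?_⟩
          have h1 : f ⟨(c', a'), by omega, by omega, by omega⟩
              = Quot.mk r ⟨(b, c, a), hmem⟩ :=
            congrArg (Quot.mk r) (Subtype.ext (by dsimp only; simp only [Prod.mk.injEq]; omega))
          have h2 : Quot.mk r ⟨(a, b, c), ⟨⟨ha, hb, hc⟩,
              Or.inr (Or.inl ⟨⟨a', ha'⟩, ⟨m, hm⟩, ⟨c', hc'⟩⟩), hsum⟩⟩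
              = Quot.mk r ⟨(b, c, a), hmem⟩ := Quot.sound rfl
          exact h1.trans h2.symm
        · obtain ⟨m, hm⟩ := hoc
          have hmem1 : Pn n (b, c, a) :=
            ⟨⟨hb, hc, ha⟩, Or.inr (Or.inl ⟨⟨b', hb'⟩, ⟨m, hm⟩, ⟨a', ha'⟩⟩), by show b + c + a = n; omega⟩
          have hmem2 : Pn n (c, a, b) :=
            ⟨⟨hc, ha, hb⟩, Or.inl ⟨⟨m, hm⟩, ⟨a', ha'⟩, ⟨b', hb'⟩⟩, by show c + a + b = n; omega⟩
          refine ⟨⟨(a', b'), by omega, by omega, by omega⟩, ?_⟩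
          have h1 : f ⟨(a', b'), by omega, by omega, by omega⟩
              = Quot.mk r ⟨(c, a, b), hmem2⟩ :=
            congrArg (Quot.mk r) (Subtype.ext (by dsimp only; simp only [Prod.mk.injEq]; omega))
          have h2 : Quot.mk r ⟨(a, b, c), ⟨⟨ha, hb, hc⟩,
              Or.inr (Or.inr ⟨⟨a', ha'⟩, ⟨b', hb'⟩, ⟨m, hm⟩⟩), hsum⟩⟩
              = Quot.mk r ⟨(b, c, a), hmem1⟩ := Quot.sound rfl
          have h3 : Quot.mk r ⟨(b, c, a), hmem1⟩ = Quot.mk r ⟨(c, a, b), hmem2⟩ :=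
            Quot.sound rfl
          exact h1.trans (h2.trans h3).symm
  have hcardeq : Nat.card {p : ℕ × ℕ // 0 < p.1 ∧ 0 < p.2 ∧ p.1 + p.2 ≤ k}
      = Nat.card (Quot r) := Nat.card_eq_of_bijective f hbij
  rw [← hcardeq, count_pairs]
  have hx : (n - 1) * (n - 3) = 4 * (k * (k - 1)) := by
    have e1 : n - 1 = 2 * k := by omega
    have e2 : n - 3 = 2 * (k - 1) := by omega
    rw [e1, e2]; ring
  omega
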